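/- For every γ ≥ 0 there exists δ > 0 such that for all α ∈ (−δ, δ), the unique solution φ_α ∈ C²([0,1]) of φ'' + γ sin φ = 0, φ(0) = 0, φ'(0) = α, satisfies |φ_α(1) − φ_α'(1) − κ'(φ_α'(1))| < inf Θ ≤ Θ(φ_α'(1)); hence (φ_α', φ_α'(1)) is an equilibrium point of the quasistatic Eulerian strut equations, and it is nontrivial for α ≠ 0. -/

import Mathlib

open MeasureTheory Set

/-- for small initial slope `α`, the pendulum solution `φ_α` (with
`φ_α(0) = 0`, `φ_α'(0) = α`) satisfies the strict threshold inequality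
`|φ_α(1) − φ_α'(1) − κ'(φ_α'(1))| < inf Θ ≤ Θ(φ_α'(1))`; hence `(φ_α', φ_α'(1))` is an
equilibrium point of the quasistatic Eulerian strut equations, nontrivial for `α ≠ 0`. -/
theorem stmt_14 (Θ κ : ℝ → ℝ) (γ c : ℝ) (hγ : 0 ≤ γ) (hc : 0 < c)
    (hΘ : ∀ x, c ≤ Θ x) (hκ : ContDiff ℝ 2 κ) (hκz : deriv κ 0 = 0) :
    ∃ δ > (0:ℝ), ∀ α : ℝ, |α| < δ → ∀ φ χ : ℝ → ℝ,
      φ 0 = 0 → χ 0 = α →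
      (∀ s ∈ Icc (0:ℝ) 1, HasDerivWithinAt φ (χ s) (Icc 0 1) s) →
      (∀ s ∈ Icc (0:ℝ) 1, HasDerivWithinAt χ (-(γ * Real.sin (φ s))) (Icc 0 1) s) →
      ((|φ 1 - χ 1 - deriv κ (χ 1)| < c ∧ c ≤ Θ (χ 1)) ∧
      (∀ s ∈ Icc (0:ℝ) 1, χ 1 - χ s + γ * ∫ σ in s..1, Real.sin (φ σ) = 0) ∧
      (α ≠ 0 → ¬ ∀ s ∈ Icc (0:ℝ) 1, χ s = 0)) := by
  have hdκ : Continuous (deriv κ) := hκ.continuous_deriv one_le_two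
  obtain ⟨δ₀, hδ₀, hδ₀'⟩ :=
    Metric.continuousAt_iff.mp (hdκ.continuousAt (x := 0)) (c/2) (by linarith)
  refine ⟨min δ₀ (c/8), by positivity, ?_⟩
  intro α hα φ χ hφ0 hχ0 hφ hχ
  have hα₀ : |α| < δ₀ := lt_of_lt_of_le hα (min_le_left _ _)
  have hαc : |α| < c/8 := lt_of_lt_of_le hα (min_le_right _ _)
  have hφc : ContinuousOn φ (Icc 0 1) := fun s hs => (hφ s hs).continuousWithinAt
  have hχc : ContinuousOn χ (Icc 0 1) := fun s hs => (hχ s hs).continuousWithinAt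
  -- Energy conservation
  have key : ∀ s ∈ Icc (0:ℝ) 1,
      χ s ^ 2 / 2 - γ * Real.cos (φ s) = χ 0 ^ 2 / 2 - γ * Real.cos (φ 0) := by
    apply constant_of_has_deriv_right_zero
    · exact ((hχc.pow 2).div_const 2).sub
        (continuousOn_const.mul (Real.continuous_cos.comp_continuousOn hφc))
    · intro x hx
      have hx' : x ∈ Icc (0:ℝ) 1 := ⟨hx.1, hx.2.le⟩
      have hmem : Icc (0:ℝ) 1 ∈ nhdsWithin x (Ici x) := Icc_mem_nhdsGE_of_mem hx
      have hd1 : HasDerivWithinAt (fun t => χ t ^ 2 / 2)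
          (χ x * (-(γ * Real.sin (φ x)))) (Icc 0 1) x := by
        have h := ((hχ x hx').pow 2).div_const 2
        exact h.congr_deriv (by rw [show (2:ℕ) - 1 = 1 from rfl]; ring)
      have hd2 : HasDerivWithinAt (fun t => γ * Real.cos (φ t))
          (γ * (-Real.sin (φ x) * χ x)) (Icc 0 1) x :=
        ((Real.hasDerivAt_cos (φ x)).comp_hasDerivWithinAt x (hφ x hx')).const_mul γ
      have hd := hd1.sub hd2
      have hd0 : HasDerivWithinAt (fun t => χ t ^ 2 / 2 - γ * Real.cos (φ t)) 0 (Icc 0 1) x := by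
        exact hd.congr_deriv (by ring)
      exact hd0.mono_of_mem_nhdsWithin hmem
  have hχb : ∀ s ∈ Icc (0:ℝ) 1, |χ s| ≤ |α| := by
    intro s hs
    have h := key s hs
    rw [hχ0, hφ0, Real.cos_zero] at h
    have hcos : Real.cos (φ s) ≤ 1 := Real.cos_le_one _
    have hsq : χ s ^ 2 ≤ α ^ 2 := by nlinarith
    nlinarith [abs_nonneg (χ s), abs_nonneg α, sq_abs (χ s), sq_abs α]
  have hχ1 : |χ 1| ≤ |α| := hχb 1 ⟨zero_le_one, le_rfl⟩
  have hφ1 : |φ 1| ≤ |α| := by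
    have h := Convex.norm_image_sub_le_of_norm_hasDerivWithin_le hφ
      (fun x hx => by simpa using hχb x hx) (convex_Icc 0 1)
      (⟨le_rfl, zero_le_one⟩ : (0:ℝ) ∈ Icc (0:ℝ) 1) (⟨zero_le_one, le_rfl⟩ : (1:ℝ) ∈ Icc (0:ℝ) 1)
    simpa [hφ0, Real.norm_eq_abs] using h
  refine ⟨⟨?_, hΘ _⟩, ?_, ?_⟩
  · -- threshold inequality
    have hκ1 : |deriv κ (χ 1)| < c/2 := by
      have := hδ₀' (show dist (χ 1) 0 < δ₀ by
        simpa [Real.dist_eq] using lt_of_le_of_lt hχ1 hα₀)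
      simpa [Real.dist_eq, hκz] using this
    calc |φ 1 - χ 1 - deriv κ (χ 1)|
        ≤ |φ 1| + |χ 1| + |deriv κ (χ 1)| := by
          have := abs_sub (φ 1 - χ 1) (deriv κ (χ 1))
          have := abs_sub (φ 1) (χ 1)
          calc |φ 1 - χ 1 - deriv κ (χ 1)| ≤ |φ 1 - χ 1| + |deriv κ (χ 1)| :=
                abs_sub _ _
            _ ≤ |φ 1| + |χ 1| + |deriv κ (χ 1)| := by
                have := abs_sub (φ 1) (χ 1); linarith
      _ < c := by linarith
  · -- FTC identity
    intro s hs
    have hs1 : s ≤ 1 := hs.2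
    have hsub : Icc s 1 ⊆ Icc 0 1 := Icc_subset_Icc hs.1 le_rfl
    have hder : ∀ t ∈ Ioo s 1, HasDerivWithinAt χ (-(γ * Real.sin (φ t))) (Ioi t) t := by
      intro t ht
      have htm : t ∈ Icc (0:ℝ) 1 := ⟨le_trans hs.1 ht.1.le, ht.2.le⟩
      have h := (hχ t htm).hasDerivAt (Icc_mem_nhds (lt_of_le_of_lt hs.1 ht.1) ht.2)
      exact h.hasDerivWithinAt
    have hcont : ContinuousOn χ (Icc s 1) := hχc.mono hsub
    have hint : IntervalIntegrable (fun t => -(γ * Real.sin (φ t))) volume s 1 := by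
      apply ContinuousOn.intervalIntegrable
      rw [uIcc_of_le hs1]
      exact (continuousOn_const.mul (Real.continuous_sin.comp_continuousOn (hφc.mono hsub))).neg
    have hftc := intervalIntegral.integral_eq_sub_of_hasDeriv_right_of_le hs1 hcont hder hint
    have hneg : (∫ t in s..1, -(γ * Real.sin (φ t))) = -(γ * ∫ t in s..1, Real.sin (φ t)) := by
      rw [intervalIntegral.integral_neg, intervalIntegral.integral_const_mul]
    rw [hneg] at hftc
    linarith [hftc]
  · intro hα0 hall
    exact hα0 (hχ0 ▸ hall 0 ⟨le_rfl, zero_le_one⟩)
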